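/- (Analytic extension of the Poisson kernel, boundary row case) There exists a constant C > 0 such that the following holds for every integer N ≥ 1, every integer n₁ with |n₁| ≤ N−1, and every integer m with |m| ≤ N/2. For k = 1, …, 2N−1 let a_k be the unique positive real with cosh(a_k) = 2 − cos(kπ/(2N)). Define the entire function G(z) := (1/N) · Σ_{k=1}^{2N−1} sin(πk(Nz+N)/(2N)) · sin(πk(n₁+N)/(2N)) · sinh(a_k(m+N)) / sinh(2a_kN), where sin and sinh denote the complex sine and hyperbolic sine. Then |G(z)| ≤ C/N for every z ∈ ℂ with |Re z| ≤ 1/2 and |Im z| ≤ 1/16; moreover G(n/N) = F(n,m) for every integer n, where F is the discrete Poisson kernel of Q_N at (n₁, N) given by the same formula with z replaced by n/N. -/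

import Mathlib

/-- The discrete Poisson kernel of `Q_N` at the boundary point `(n₁, N)`. -/
noncomputable def discretePoissonKernel (N : ℕ) (n₁ : ℤ) (a : ℕ → ℝ) (n m : ℤ) : ℝ :=
  (1 / (N : ℝ)) * ∑ k ∈ Finset.Icc 1 (2 * N - 1),
    Real.sin (Real.pi * (k : ℝ) * ((n : ℝ) + (N : ℝ)) / (2 * (N : ℝ))) *
      Real.sin (Real.pi * (k : ℝ) * ((n₁ : ℝ) + (N : ℝ)) / (2 * (N : ℝ))) *
      (Real.sinh (a k * ((m : ℝ) + (N : ℝ))) / Real.sinh (2 * a k * (N : ℝ)))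

/-- The entire extension `G(z)` of `n ↦ F(n, m)`, rescaled by `n = Nz`. -/
noncomputable def poissonKernelExt (N : ℕ) (n₁ : ℤ) (m : ℤ) (a : ℕ → ℝ) (z : ℂ) : ℂ :=
  (1 / (N : ℂ)) * ∑ k ∈ Finset.Icc 1 (2 * N - 1),
    Complex.sin ((Real.pi : ℂ) * (k : ℂ) * ((N : ℂ) * z + (N : ℂ)) / (2 * (N : ℂ))) *
      Complex.sin ((Real.pi : ℂ) * (k : ℂ) * ((n₁ : ℂ) + (N : ℂ)) / (2 * (N : ℂ))) *
      (Complex.sinh ((a k : ℂ) * ((m : ℂ) + (N : ℂ))) /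
        Complex.sinh (2 * (a k : ℂ) * (N : ℂ)))

open Real in
lemma aux_sinh_le_two_mul {v : ℝ} (h0 : 0 ≤ v) (h : v ≤ 1/2) : Real.sinh v ≤ 2 * v := by
  have hv1 : (0:ℝ) < 1 - v := by linarith
  have h2 : 1 - v ≤ Real.exp (-v) := by linarith [Real.add_one_le_exp (-v)]
  have h1 : Real.exp v ≤ 1 + v + 2 * v ^ 2 := by
    rw [show Real.exp v = 1 / Real.exp (-v) by rw [Real.exp_neg]; field_simp]
    rw [div_le_iff₀ (Real.exp_pos _)]
    nlinarith [Real.exp_pos (-v)]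
  rw [Real.sinh_eq]
  nlinarith

lemma aux_cosh_bound {θ : ℝ} (h0 : 0 ≤ θ) (hπ : θ ≤ Real.pi) :
    Real.cosh (θ/5) ≤ 2 - Real.cos θ := by
  have h4 : θ ≤ 4 := hπ.trans Real.pi_le_four
  have hs : Real.sinh (θ/10) ≤ 2 * (θ/10) := aux_sinh_le_two_mul (by positivity) (by linarith)
  have hs0 : 0 ≤ Real.sinh (θ/10) := Real.sinh_nonneg_iff.2 (by positivity)
  have hc : Real.cosh (θ/5) = 1 + 2 * Real.sinh (θ/10) ^ 2 := by
    have := Real.cosh_two_mul (θ/10)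
    have h2 := Real.cosh_sq (θ/10)
    rw [show θ/5 = 2 * (θ/10) by ring, this, h2]; ring
  have hcos : Real.cos θ ≤ 1 - 2 / Real.pi ^ 2 * θ ^ 2 :=
    Real.cos_le_one_sub_mul_cos_sq (by rwa [abs_of_nonneg h0])
  have hpi2 : Real.pi ^ 2 ≤ 25 := by nlinarith [Real.pi_le_four, Real.pi_pos]
  have hpos : (0:ℝ) < Real.pi ^ 2 := by positivity
  have key : 2 / Real.pi ^ 2 * θ ^ 2 ≥ 2 / 25 * θ ^ 2 := by
    gcongr
  nlinarith

lemma aux_sinh_ratio {x y : ℝ} (hxy : x ≤ y) (hy : 0 < y) :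
    Real.sinh x / Real.sinh y ≤ Real.exp (x - y) := by
  have hsy : 0 < Real.sinh y := Real.sinh_pos_iff.2 hy
  rw [div_le_iff₀ hsy]
  have e1 : Real.exp (x - y) * Real.sinh y = (Real.exp x - Real.exp (x - 2*y)) / 2 := by
    rw [Real.sinh_eq]
    rw [show Real.exp (x-y) * ((Real.exp y - Real.exp (-y))/2)
      = (Real.exp (x-y) * Real.exp y - Real.exp (x-y) * Real.exp (-y)) / 2 by ring,
      ← Real.exp_add, ← Real.exp_add]
    ring_nf
  have key : Real.exp (x - 2*y) ≤ Real.exp (-x) := Real.exp_le_exp.2 (by linarith)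
  rw [Real.sinh_eq, e1]
  linarith

lemma aux_abs_sin_le (w : ℂ) : ‖Complex.sin w‖ ≤ Real.exp |w.im| := by
  rw [Complex.sin]
  have htri : ‖Complex.exp (-w * Complex.I) - Complex.exp (w * Complex.I)‖ ≤
      ‖Complex.exp (-w * Complex.I)‖ + ‖Complex.exp (w * Complex.I)‖ := by
    simpa [sub_eq_add_neg] using norm_add_le (Complex.exp (-w * Complex.I))
      (-Complex.exp (w * Complex.I))
  have h1 : ‖Complex.exp (-w * Complex.I)‖ = Real.exp w.im := by
    rw [Complex.norm_exp]; congr 1; simp [Complex.mul_I_re]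
  have h2 : ‖Complex.exp (w * Complex.I)‖ = Real.exp (-w.im) := by
    rw [Complex.norm_exp]; congr 1; simp [Complex.mul_I_re]
  have e1 : Real.exp w.im ≤ Real.exp |w.im| := Real.exp_le_exp.2 (le_abs_self _)
  have e2 : Real.exp (-w.im) ≤ Real.exp |w.im| := Real.exp_le_exp.2 (neg_le_abs _)
  calc ‖(Complex.exp (-w * Complex.I) - Complex.exp (w * Complex.I)) * Complex.I / 2‖
      = ‖Complex.exp (-w * Complex.I) - Complex.exp (w * Complex.I)‖ / 2 := by
        simp [norm_div, norm_mul]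
    _ ≤ (Real.exp w.im + Real.exp (-w.im)) / 2 := by rw [← h1, ← h2]; linarith
    _ ≤ Real.exp |w.im| := by linarith

lemma aux_geom (n : ℕ) : ∑ k ∈ Finset.range n, (17/18 : ℝ) ^ k ≤ 18 := by
  rw [geom_sum_eq (by norm_num : (17/18:ℝ) ≠ 1)]
  have h1 : (0:ℝ) ≤ (17/18:ℝ) ^ n := by positivity
  have h2 : (17/18:ℝ) ^ n ≤ 1 := pow_le_one₀ (by norm_num) (by norm_num)
  rw [div_le_iff_of_neg (by norm_num : (17/18:ℝ) - 1 < 0)]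
  linarith


set_option maxHeartbeats 1000000 in
/-- Analytic extension of the Poisson kernel: `G` extends `n ↦ F(n,m)` via `G(n/N) = F(n,m)`
and satisfies `|G(z)| ≤ C/N` on the rectangle `{|Re z| ≤ 1/2, |Im z| ≤ 1/16}`. Here `a_k`
is the unique positive solution of `cosh a_k = 2 - cos(kπ/(2N))`. -/
theorem poisson_kernel_analytic_extension :
    ∃ C > (0 : ℝ), ∀ N : ℕ, 1 ≤ N → ∀ n₁ : ℤ, |n₁| ≤ (N : ℤ) - 1 →
      ∀ m : ℤ, 2 * |m| ≤ (N : ℤ) →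
      ∀ a : ℕ → ℝ,
      (∀ k : ℕ, 1 ≤ k → k ≤ 2 * N - 1 →
        0 < a k ∧ Real.cosh (a k) = 2 - Real.cos ((k : ℝ) * Real.pi / (2 * (N : ℝ)))) →
      (∀ z : ℂ, |z.re| ≤ 1/2 → |z.im| ≤ 1/16 →
        ‖poissonKernelExt N n₁ m a z‖ ≤ C / N) ∧
      (∀ n : ℤ, poissonKernelExt N n₁ m a ((n : ℂ) / (N : ℂ)) =
        ((discretePoissonKernel N n₁ a n m : ℝ) : ℂ)) := by
  refine ⟨18, by norm_num, ?_⟩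
  intro N hN n₁ hn₁ m hm a ha
  have hNc : (N : ℂ) ≠ 0 := Nat.cast_ne_zero.2 (by omega)
  constructor
  · intro z hre him
    have hN0 : (0:ℝ) < N := by exact_mod_cast Nat.pos_of_ne_zero (by omega)
    have hNc : (N : ℂ) ≠ 0 := Nat.cast_ne_zero.2 (by omega)
    have habs2 : |2*m| ≤ (N:ℤ) := by rw [abs_mul]; simpa using hm
    have hmu : 2*(m:ℝ) ≤ N := by exact_mod_cast (abs_le.1 habs2).2
    have hml : -(N:ℝ) ≤ 2*(m:ℝ) := by exact_mod_cast (abs_le.1 habs2).1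
    have hmN : ((m:ℝ) + N) ≥ N/2 := by linarith
    have hmN' : (m:ℝ) ≤ N := by linarith
    rw [poissonKernelExt]
    rw [norm_mul]
    have h1N : ‖1 / (N:ℂ)‖ = 1 / N := by
      rw [norm_div, norm_one, Complex.norm_natCast]
    rw [h1N]
    have hsum : ‖∑ k ∈ Finset.Icc 1 (2 * N - 1),
        Complex.sin ((Real.pi : ℂ) * (k : ℂ) * ((N : ℂ) * z + (N : ℂ)) / (2 * (N : ℂ))) *
          Complex.sin ((Real.pi : ℂ) * (k : ℂ) * ((n₁ : ℂ) + (N : ℂ)) / (2 * (N : ℂ))) *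
          (Complex.sinh ((a k : ℂ) * ((m : ℂ) + (N : ℂ))) /
            Complex.sinh (2 * (a k : ℂ) * (N : ℂ)))‖ ≤ 18 := by
      refine (norm_sum_le _ _).trans ?_
      have hterm : ∀ k ∈ Finset.Icc 1 (2 * N - 1),
          ‖Complex.sin ((Real.pi : ℂ) * (k : ℂ) * ((N : ℂ) * z + (N : ℂ)) / (2 * (N : ℂ))) *
            Complex.sin ((Real.pi : ℂ) * (k : ℂ) * ((n₁ : ℂ) + (N : ℂ)) / (2 * (N : ℂ))) *
            (Complex.sinh ((a k : ℂ) * ((m : ℂ) + (N : ℂ))) /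
              Complex.sinh (2 * (a k : ℂ) * (N : ℂ)))‖ ≤ (17/18 : ℝ) ^ k := by
        intro k hk
        obtain ⟨hk1, hk2⟩ := Finset.mem_Icc.1 hk
        obtain ⟨hak, hcoshk⟩ := ha k hk1 hk2
        have hk1' : (1:ℝ) ≤ k := by exact_mod_cast hk1
        have hk2' : (k:ℝ) ≤ 2*N - 1 := by
          have : (k:ℝ) ≤ ((2*N - 1 : ℕ) : ℝ) := by exact_mod_cast hk2
          rw [Nat.cast_sub (by omega)] at this; push_cast at this; linarith
        -- θ and lower bound on a k
        set θ : ℝ := (k:ℝ) * Real.pi / (2 * N) with hθdef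
        have hθ0 : 0 ≤ θ := by positivity
        have hθπ : θ ≤ Real.pi := by
          rw [hθdef, div_le_iff₀ (by positivity)]
          nlinarith [Real.pi_pos]
        have hak5 : θ/5 ≤ a k := by
          have hle : Real.cosh (θ/5) ≤ Real.cosh (a k) := by
            rw [hcoshk]; exact aux_cosh_bound hθ0 hθπ
          have := Real.cosh_le_cosh.1 hle
          rwa [abs_of_nonneg (by positivity), abs_of_pos hak] at this
        -- first sine
        have hw1 : (Real.pi : ℂ) * (k : ℂ) * ((N : ℂ) * z + (N : ℂ)) / (2 * (N : ℂ))
            = ((Real.pi * k / 2 : ℝ) : ℂ) * (z + 1) := by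
          push_cast; field_simp
        have him1 : |(((Real.pi * k / 2 : ℝ) : ℂ) * (z + 1)).im| ≤ Real.pi * k / 32 := by
          have : (((Real.pi * k / 2 : ℝ) : ℂ) * (z + 1)).im = (Real.pi * k / 2) * z.im := by
            simp [Complex.mul_im]
          rw [this, abs_mul, abs_of_nonneg (by positivity : (0:ℝ) ≤ Real.pi * k / 2)]
          calc Real.pi * k / 2 * |z.im| ≤ Real.pi * k / 2 * (1/16) := by
                gcongr
            _ = Real.pi * k / 32 := by ring
        have hsin1 : ‖Complex.sin ((Real.pi : ℂ) * (k : ℂ) * ((N : ℂ) * z + (N : ℂ)) / (2 * (N : ℂ)))‖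
            ≤ Real.exp (Real.pi * k / 32) := by
          rw [hw1]
          exact (aux_abs_sin_le _).trans (Real.exp_le_exp.2 him1)
        -- second sine
        have hw2 : (Real.pi : ℂ) * (k : ℂ) * ((n₁ : ℂ) + (N : ℂ)) / (2 * (N : ℂ))
            = ((Real.pi * k * ((n₁:ℝ) + N) / (2 * N) : ℝ) : ℂ) := by
          push_cast; ring
        have hsin2 : ‖Complex.sin ((Real.pi : ℂ) * (k : ℂ) * ((n₁ : ℂ) + (N : ℂ)) / (2 * (N : ℂ)))‖ ≤ 1 := by
          rw [hw2, ← Complex.ofReal_sin, Complex.norm_real, Real.norm_eq_abs]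
          exact abs_le.mpr ⟨Real.neg_one_le_sin _, Real.sin_le_one _⟩
        -- sinh ratio
        set x : ℝ := a k * ((m:ℝ) + N) with hxdef
        set y : ℝ := 2 * a k * N with hydef
        have hx0 : 0 ≤ x := by
          rw [hxdef]; exact mul_nonneg hak.le (by linarith)
        have hy0 : 0 < y := by
          rw [hydef]; exact mul_pos (mul_pos two_pos hak) hN0
        have hxy : x ≤ y := by rw [hxdef, hydef]; nlinarith
        have hshc : Complex.sinh ((a k : ℂ) * ((m : ℂ) + (N : ℂ))) /
            Complex.sinh (2 * (a k : ℂ) * (N : ℂ)) = ((Real.sinh x / Real.sinh y : ℝ) : ℂ) := by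
          rw [hxdef, hydef,
            show ((a k : ℂ) * ((m : ℂ) + (N : ℂ))) = ((a k * ((m:ℝ) + (N:ℝ)) : ℝ) : ℂ) by
              push_cast; ring,
            show (2 * (a k : ℂ) * (N : ℂ)) = ((2 * a k * (N:ℝ) : ℝ) : ℂ) by push_cast; ring,
            ← Complex.ofReal_sinh, ← Complex.ofReal_sinh, ← Complex.ofReal_div]
        have hratio : ‖Complex.sinh ((a k : ℂ) * ((m : ℂ) + (N : ℂ))) /
            Complex.sinh (2 * (a k : ℂ) * (N : ℂ))‖ ≤ Real.exp (x - y) := by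
          rw [hshc, Complex.norm_real, Real.norm_eq_abs]
          have h1 : Real.sinh x / Real.sinh y ≤ Real.exp (x - y) := aux_sinh_ratio hxy hy0
          have h2 : 0 ≤ Real.sinh x / Real.sinh y :=
            div_nonneg (Real.sinh_nonneg_iff.2 hx0) (Real.sinh_nonneg_iff.2 hy0.le)
          rw [abs_of_nonneg h2]
          exact h1
        -- combine
        have h5 : θ * (N:ℝ) = k * Real.pi / 2 := by
          rw [hθdef]; field_simp
        have hxmy : x - y ≤ -(Real.pi * k/20) := by
          have e1 : x - y = a k * ((m:ℝ) - N) := by rw [hxdef, hydef]; ring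
          have e2 : (m:ℝ) - N ≤ -(N:ℝ)/2 := by linarith
          have h3 : x - y ≤ -(a k * N)/2 := by
            rw [e1]
            have := mul_le_mul_of_nonneg_left e2 hak.le
            linarith only [this]
          have h4 : θ/5 * (N:ℝ) ≤ a k * N := mul_le_mul_of_nonneg_right hak5 hN0.le
          linarith only [h3, h4, h5]
        have hexp : Real.pi * k/32 + (x - y) ≤ -((k:ℝ)/17) := by
          have hπk : (160:ℝ)/51 * k ≤ Real.pi * k :=
            mul_le_mul_of_nonneg_right (by nlinarith [Real.pi_gt_d6]) (by positivity)
          linarith only [hπk, hxmy]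
        have hpow : Real.exp (-((k:ℝ)/17)) ≤ (17/18 : ℝ) ^ k := by
          have hbase : Real.exp (-(1/17 : ℝ)) ≤ 17/18 := by
            have h := Real.add_one_le_exp (1/17 : ℝ)
            rw [Real.exp_neg]
            have h0 : (0:ℝ) < 18/17 := by norm_num
            have : (Real.exp (1/17:ℝ))⁻¹ ≤ (18/17 : ℝ)⁻¹ := by
              apply inv_anti₀ h0; linarith
            linarith [this]
          calc Real.exp (-((k:ℝ)/17)) = (Real.exp (-(1/17:ℝ))) ^ k := by
                rw [← Real.exp_nat_mul]; congr 1; ring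
            _ ≤ (17/18 : ℝ) ^ k := pow_le_pow_left₀ (Real.exp_pos _).le hbase k
        calc ‖Complex.sin ((Real.pi : ℂ) * (k : ℂ) * ((N : ℂ) * z + (N : ℂ)) / (2 * (N : ℂ))) *
            Complex.sin ((Real.pi : ℂ) * (k : ℂ) * ((n₁ : ℂ) + (N : ℂ)) / (2 * (N : ℂ))) *
            (Complex.sinh ((a k : ℂ) * ((m : ℂ) + (N : ℂ))) /
              Complex.sinh (2 * (a k : ℂ) * (N : ℂ)))‖
            = ‖Complex.sin ((Real.pi : ℂ) * (k : ℂ) * ((N : ℂ) * z + (N : ℂ)) / (2 * (N : ℂ)))‖ *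
              ‖Complex.sin ((Real.pi : ℂ) * (k : ℂ) * ((n₁ : ℂ) + (N : ℂ)) / (2 * (N : ℂ)))‖ *
              ‖Complex.sinh ((a k : ℂ) * ((m : ℂ) + (N : ℂ))) /
                Complex.sinh (2 * (a k : ℂ) * (N : ℂ))‖ := by
              rw [norm_mul, norm_mul]
          _ ≤ Real.exp (Real.pi * k / 32) * 1 * Real.exp (x - y) := by
              exact mul_le_mul (mul_le_mul hsin1 hsin2 (norm_nonneg _) (Real.exp_pos _).le)
                hratio (norm_nonneg _) (by positivity)
          _ = Real.exp (Real.pi * k/32 + (x - y)) := by rw [mul_one, ← Real.exp_add]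
          _ ≤ Real.exp (-((k:ℝ)/17)) := Real.exp_le_exp.2 hexp
          _ ≤ (17/18 : ℝ) ^ k := hpow
      refine (Finset.sum_le_sum hterm).trans ?_
      refine le_trans (Finset.sum_le_sum_of_subset_of_nonneg ?_ ?_) (aux_geom (2*N))
      · intro k hk
        simp only [Finset.mem_Icc] at hk
        simp only [Finset.mem_range]
        omega
      · intro k _ _; positivity
    calc 1 / (N:ℝ) * ‖_‖ ≤ 1 / (N:ℝ) * 18 := by gcongr
      _ = 18 / N := by ring
  · intro n
    rw [poissonKernelExt, discretePoissonKernel]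
    push_cast
    congr 1
    refine Finset.sum_congr rfl fun k hk => ?_
    rw [mul_div_cancel₀ _ hNc]
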